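/- Under the hypotheses of the consensus reduction (Algorithm 1 run with k < n−1 and t = 1): every process that terminates computes the same value. Precisely, if each deciding process obtains the views of some n−1 processes (out of n, each view satisfying the k-IS properties with n−k ≥ 2), selects the ⊆-minimum among the views it obtained, and outputs the minimum value occurring in it, then all outputs are equal, and the output is a value that was written by some process (Validity). -/
import Mathlib


/-- A view `w` is "selected" by a deciding process: it is the ⊆-smallest among
the views of some set `R` of n-1 processes, all of which returned. -/
def SelectedView1 {n : ℕ} {Val : Type}
    (views : Fin n → Option (Finset (Fin n × Val)))
    (w : Finset (Fin n × Val)) : Prop :=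
  ∃ R : Finset (Fin n), R.card = n - 1 ∧ (∀ r ∈ R, (views r).isSome) ∧
    (∃ r ∈ R, views r = some w) ∧
    (∀ r ∈ R, ∀ u, views r = some u → w ⊆ u)

/-- Agreement and Validity of the consensus algorithm built on a
k-IS object with k < n-1 and t = 1: any two selected views coincide (so all
deciding processes output the same minimum value), and every value in a
selected view was written by some process. -/
theorem kIS_consensus_agreement_validity
    (n k : ℕ) (Val : Type) [LinearOrder Val]
    (hn : 3 ≤ n) (hk : k < n - 1)
    (input : Fin n → Val)
    (views : Fin n → Option (Finset (Fin n × Val)))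
    (minView : Finset (Fin n × Val))
    (hret : ∃ i₀, views i₀ = some minView)
    (hmin : ∀ i w, views i = some w → minView ⊆ w)
    (hself : ∀ i vi, views i = some vi → ∃ v, (i, v) ∈ vi)
    (hcont : ∀ i j vi vj, views i = some vi → views j = some vj →
      vi ⊆ vj ∨ vj ⊆ vi)
    (himm : ∀ i j vi vj, views i = some vi → views j = some vj →
      (∃ v, (i, v) ∈ vj) → vi ⊆ vj)
    (hsize : ∀ i w, views i = some w → n - k ≤ w.card)
    (huniq : ∀ i v v', (i, v) ∈ minView → (i, v') ∈ minView → v = v')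
    -- Validity of the views: a pair ⟨j, v⟩ records the value written by p_j
    (hvalid : ∀ i w, views i = some w → ∀ p ∈ w, p.2 = input p.1) :
    (∀ w w', SelectedView1 views w → SelectedView1 views w' → w = w') ∧
    (∀ w, SelectedView1 views w → w = minView) ∧
    (∀ w, SelectedView1 views w → ∀ v ∈ w.image Prod.snd,
       ∃ j, v = input j) := by
  obtain ⟨i₀, hi₀⟩ := hret
  have key : ∀ w, SelectedView1 views w → w = minView := by
    rintro w ⟨R, hR, hsome, ⟨r, hrR, hrw⟩, hsub⟩
    apply Finset.Subset.antisymm _ (hmin r w hrw)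
    by_cases hiR : i₀ ∈ R
    · exact hsub i₀ hiR minView hi₀
    · -- minView has at least 2 elements, with distinct indices
      have hcard2 : 2 ≤ minView.card := by
        have h1 := hsize i₀ minView hi₀
        omega
      obtain ⟨p, hp, q, hq, hpq⟩ := Finset.one_lt_card.mp hcard2
      have hne : p.1 ≠ q.1 := by
        intro h
        exact hpq (Prod.ext h (huniq p.1 p.2 q.2 (by simpa using hp)
          (by rw [h]; simpa using hq)))
      -- pick a pair whose index is not i₀
      obtain ⟨pr, hpr, hprne⟩ : ∃ pr ∈ minView, pr.1 ≠ i₀ := by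
        rcases eq_or_ne p.1 i₀ with h | h
        · exact ⟨q, hq, by rw [← h]; exact fun hh => hne hh.symm⟩
        · exact ⟨p, hp, h⟩
      set j := pr.1 with hj
      have hjR : j ∈ R := by
        by_contra hjR
        have hcompl : Rᶜ.card = 1 := by
          have := Finset.card_compl R
          simp only [Fintype.card_fin] at this
          omega
        obtain ⟨x, hx⟩ := Finset.card_eq_one.mp hcompl
        have h1 : i₀ ∈ Rᶜ := Finset.mem_compl.mpr hiR
        have h2 : j ∈ Rᶜ := Finset.mem_compl.mpr hjR
        rw [hx, Finset.mem_singleton] at h1 h2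
        exact hprne (h2.trans h1.symm)
      obtain ⟨vj, hvj⟩ := Option.isSome_iff_exists.mp (hsome j hjR)
      have hvjmin : vj ⊆ minView :=
        himm j i₀ vj minView hvj hi₀ ⟨pr.2, by simpa using hpr⟩
      exact (hsub j hjR vj hvj).trans hvjmin
  refine ⟨fun w w' hw hw' => (key w hw).trans (key w' hw').symm, key, ?_⟩
  intro w hw v hv
  rw [key w hw] at hv
  obtain ⟨p, hp, hpv⟩ := Finset.mem_image.mp hv
  exact ⟨p.1, by rw [← hpv, hvalid i₀ minView hi₀ p hp]⟩
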